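/- Let k ≥ 2, (x_n)_{n≥1} ⊆ [0,1], and let G : [0,1] → ℝ be an asymptotic distribution function of (x_n) along a strictly increasing sequence (N_j) of positive integers. Let A = [u,v] ⊆ [0,1] be an interval with Lebesgue measure a = v − u > 0 and let b = G(v) − G(u) be its measure with respect to G. Then for every s > 0: liminf_{j→∞} C_k^*(A; s, N_j) ≥ (b^k / a^{k-1})·s^{2(k-1)}. -/

import Mathlib

open Finset Filter MeasureTheory
open scoped Classical ENNReal NNReal

/-- Distance from `x` to the nearest integer. -/
noncomputable def nint (x : ℝ) : ℝ := |x - round x|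

/-- Signed distance from `x` to the origin modulo 1. -/
noncomputable def sdist (x : ℝ) : ℝ :=
  if Int.fract x ≤ 1 / 2 then Int.fract x else Int.fract x - 1

/-- Number of `k`-tuples of pairwise distinct indices in `{1,…,N}` whose rescaled signed
differences lie in the box `∏ r, [a r, b r]`. -/
noncomputable def corrBoxCount (x : ℕ → ℝ) (k N : ℕ) (a b : Fin (k - 1) → ℝ) : ℕ :=
  ((Fintype.piFinset fun _ : Fin k => Finset.Icc 1 N).filter fun i =>
    Function.Injective i ∧ ∀ r : Fin (k - 1),
      (N : ℝ) * sdist (x (i ⟨0, by have := r.2; omega⟩) - x (i ⟨r.1 + 1, by have := r.2; omega⟩))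
        ∈ Set.Icc (a r) (b r)).card

/-- The sequence `x` (indexed by `n ≥ 1`) has Poissonian correlations of order `k`. -/
def HasPoissonianCorr (x : ℕ → ℝ) (k : ℕ) : Prop :=
  ∀ a b : Fin (k - 1) → ℝ, (∀ r, a r ≤ b r) →
    Tendsto (fun N : ℕ => (corrBoxCount x k N a b : ℝ) / N) atTop
      (nhds (∏ r, (b r - a r)))

/-- The `k`-th order correlation function `R_k(s₁,…,s_{k-1},N)` (pairwise distinct indices). -/
noncomputable def Rcorr (x : ℕ → ℝ) (k N : ℕ) (s : Fin (k - 1) → ℝ) : ℝ :=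
  (((Fintype.piFinset fun _ : Fin k => Finset.Icc 1 N).filter fun i =>
    Function.Injective i ∧ ∀ r : Fin (k - 1),
      nint (x (i ⟨0, by have := r.2; omega⟩) - x (i ⟨r.1 + 1, by have := r.2; omega⟩))
        ≤ s r / N).card : ℝ) / N

/-- The `k`-th order correlation function `R_k^*(s₁,…,s_{k-1},N)` (indices not necessarily
distinct). -/
noncomputable def RcorrStar (x : ℕ → ℝ) (k N : ℕ) (s : Fin (k - 1) → ℝ) : ℝ :=
  (((Fintype.piFinset fun _ : Fin k => Finset.Icc 1 N).filter fun i =>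
    ∀ r : Fin (k - 1),
      nint (x (i ⟨0, by have := r.2; omega⟩) - x (i ⟨r.1 + 1, by have := r.2; omega⟩))
        ≤ s r / N).card : ℝ) / N

/-- The interval modulo 1 with center `x₀` and radius `r`, viewed inside `[0,1)`. -/
def ballMod (x₀ r : ℝ) : Set ℝ := {y ∈ Set.Ico (0:ℝ) 1 | nint (y - x₀) ≤ r}

/-- `λ_N(i, j) = λ(B(x_i, s/(2N)) ∩ B(x_j, s/(2N)))`. -/
noncomputable def lamN (x : ℕ → ℝ) (s : ℝ) (N i j : ℕ) : ℝ :=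
  (volume (ballMod (x i) (s / (2 * N)) ∩ ballMod (x j) (s / (2 * N)))).toReal

/-- The localized correlation quantity `C_k^*(A; s, N)`: the sum
`N^{k-2}·∑ λ_N(i₁,i₂)⋯λ_N(i₁,i_k)` restricted to tuples with all points `x_{i_j}` in `A`. -/
noncomputable def CkStarLoc (x : ℕ → ℝ) (k N : ℕ) (A : Set ℝ) (s : ℝ) : ℝ :=
  (N : ℝ) ^ (k - 2) *
    ∑ i ∈ Fintype.piFinset (fun _ : Fin k => Finset.Icc 1 N),
      if ∀ j : Fin k, x (i j) ∈ A then
        ∏ r : Fin (k - 1),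
          lamN x s N (i ⟨0, by have := r.2; omega⟩) (i ⟨r.1 + 1, by have := r.2; omega⟩)
      else 0

/-- If `G` is an asymptotic distribution function of `(x_n)` along `(N_j)`,
`A = [u,v] ⊆ [0,1]` with Lebesgue measure `a = v - u > 0` and `G`-measure `b = G v - G u`, then
for every `s > 0`, `liminf_j C_k^*(A; s, N_j) ≥ (b^k/a^{k-1})·s^{2(k-1)}`. -/
lemma nint_le (t : ℝ) (n : ℤ) : nint t ≤ |t - n| := by
  unfold nint
  rcases eq_or_ne n (round t) with h | h
  · simp [h]
  · have h1 : |t - round t| ≤ 1/2 := abs_sub_round t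
    have h0 : round t - n ≠ 0 := sub_ne_zero.mpr (Ne.symm h)
    have h2 : (1:ℝ) ≤ |((round t - n : ℤ) : ℝ)| := by exact_mod_cast Int.one_le_abs h0
    push_cast at h2
    have tri : |(round t:ℝ) - n| ≤ |(round t:ℝ) - t| + |t - n| := abs_sub_le _ t _
    have hc : |(round t:ℝ) - t| = |t - round t| := abs_sub_comm _ _
    linarith

lemma measurable_nint : Measurable nint := by
  unfold nint
  have h1 : Measurable fun x : ℝ => ((round x : ℤ) : ℝ) := by
    have : Measurable fun x : ℝ => (round x : ℤ) := by
      simp only [round_eq]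
      exact Int.measurable_floor.comp (measurable_id.add_const _)
    exact measurable_from_top.comp this
  exact (measurable_id.sub h1).abs

lemma measurableSet_ballMod (x₀ r : ℝ) : MeasurableSet (ballMod x₀ r) := by
  have : ballMod x₀ r = Set.Ico (0:ℝ) 1 ∩ (fun y => nint (y - x₀)) ⁻¹' Set.Iic r := rfl
  rw [this]
  exact measurableSet_Ico.inter
    ((measurable_nint.comp (measurable_id.sub_const x₀)) measurableSet_Iic)

lemma vol_Ico_inter_Icc (c d : ℝ) :
    volume (Set.Ico (0:ℝ) 1 ∩ Set.Icc c d) = ENNReal.ofReal (min 1 d - max 0 c) := by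
  rcases lt_or_ge d 1 with h | h
  · have hset : Set.Ico (0:ℝ) 1 ∩ Set.Icc c d = Set.Icc (max 0 c) d := by
      ext y
      simp only [Set.mem_inter_iff, Set.mem_Ico, Set.mem_Icc, max_le_iff]
      constructor
      · rintro ⟨⟨h1, h2⟩, h3, h4⟩; exact ⟨⟨h1, h3⟩, h4⟩
      · rintro ⟨⟨h1, h3⟩, h4⟩; exact ⟨⟨h1, by linarith⟩, h3, h4⟩
    rw [hset, Real.volume_Icc, min_eq_right h.le]
  · have hset : Set.Ico (0:ℝ) 1 ∩ Set.Icc c d = Set.Ico (max 0 c) 1 := by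
      ext y
      simp only [Set.mem_inter_iff, Set.mem_Ico, Set.mem_Icc, max_le_iff]
      constructor
      · rintro ⟨⟨h1, h2⟩, h3, h4⟩; exact ⟨⟨h1, h3⟩, h2⟩
      · rintro ⟨⟨h1, h3⟩, h2⟩; exact ⟨⟨h1, h2⟩, h3, by linarith⟩
    rw [hset, Real.volume_Ico, min_eq_left h]

lemma ofReal_max0 (a : ℝ) : ENNReal.ofReal a = ENNReal.ofReal (max 0 a) := by
  rcases le_total 0 a with h|h
  · rw [max_eq_right h]
  · rw [max_eq_left h, ENNReal.ofReal_of_nonpos h, ENNReal.ofReal_zero]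

lemma ofReal_add3 (a1 a2 a3 : ℝ) :
    ENNReal.ofReal a1 + ENNReal.ofReal a2 + ENNReal.ofReal a3
      = ENNReal.ofReal (max 0 a1 + max 0 a2 + max 0 a3) := by
  rw [ofReal_max0 a1, ofReal_max0 a2, ofReal_max0 a3,
    ← ENNReal.ofReal_add (le_max_left _ _) (le_max_left _ _),
    ← ENNReal.ofReal_add (by positivity) (le_max_left _ _)]
lemma real_lower (x₀ r : ℝ) (hx0 : 0 ≤ x₀) (hx1 : x₀ ≤ 1) (hr : 0 < r) (h2r : 2*r < 1) :
    2*r ≤ max 0 (min 1 (x₀+r+(-1)) - max 0 (x₀-r+(-1))) + max 0 (min 1 (x₀+r+0) - max 0 (x₀-r+0))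
      + max 0 (min 1 (x₀+r+1) - max 0 (x₀-r+1)) := by
  have n1 : (0:ℝ) ≤ max 0 (min 1 (x₀+r+(-1)) - max 0 (x₀-r+(-1))) := le_max_left _ _
  have n2 : (0:ℝ) ≤ max 0 (min 1 (x₀+r+0) - max 0 (x₀-r+0)) := le_max_left _ _
  have n3 : (0:ℝ) ≤ max 0 (min 1 (x₀+r+1) - max 0 (x₀-r+1)) := le_max_left _ _
  rcases le_or_gt r x₀ with h1 | h1
  · rcases le_or_gt (x₀ + r) 1 with h2 | h2
    · have e2 : max 0 (min 1 (x₀+r+0) - max 0 (x₀-r+0)) = 2*r := by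
        rw [show x₀+r+0 = x₀+r by ring, show x₀-r+0 = x₀-r by ring,
          min_eq_right h2, max_eq_right (by linarith : (0:ℝ) ≤ x₀ - r)]
        rw [max_eq_right (by linarith)]; ring
      linarith
    · have e1 : max 0 (min 1 (x₀+r+(-1)) - max 0 (x₀-r+(-1))) = x₀ + r - 1 := by
        rw [min_eq_right (by linarith), max_eq_left (by linarith : x₀-r+(-1) ≤ 0)]
        rw [max_eq_right (by linarith)]; ring
      have e2 : max 0 (min 1 (x₀+r+0) - max 0 (x₀-r+0)) = 1 - (x₀ - r) := by
        rw [show x₀+r+0 = x₀+r by ring, show x₀-r+0 = x₀-r by ring,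
          min_eq_left (by linarith), max_eq_right (by linarith : (0:ℝ) ≤ x₀ - r)]
        rw [max_eq_right (by linarith)]
      linarith
  · have h2 : x₀ + r < 1 := by linarith
    have e2 : max 0 (min 1 (x₀+r+0) - max 0 (x₀-r+0)) = x₀ + r := by
      rw [show x₀+r+0 = x₀+r by ring, show x₀-r+0 = x₀-r by ring,
        min_eq_right h2.le, max_eq_left (by linarith : x₀-r ≤ 0)]
      rw [max_eq_right (by linarith)]; ring
    have e3 : max 0 (min 1 (x₀+r+1) - max 0 (x₀-r+1)) = r - x₀ := by
      rw [min_eq_left (by linarith), max_eq_right (by linarith : (0:ℝ) ≤ x₀-r+1)]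
      rw [max_eq_right (by linarith)]; ring
    linarith

lemma real_upper (u v r : ℝ) (hu : 0 ≤ u) (huv : u ≤ v) (hv : v ≤ 1) (hr : 0 < r) (h2r : 2*r < 1) :
    max 0 (min 1 (v+r+(-1)) - max 0 (u-r+(-1))) + max 0 (min 1 (v+r+0) - max 0 (u-r+0))
      + max 0 (min 1 (v+r+1) - max 0 (u-r+1)) ≤ (v-u) + 2*r := by
  have e1 : max 0 (min 1 (v+r+(-1)) - max 0 (u-r+(-1))) ≤ max 0 (v+r-1) := by
    apply max_le_max le_rfl
    have : max 0 (u-r+(-1)) ≥ 0 := le_max_left _ _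
    have : min 1 (v+r+(-1)) ≤ v+r+(-1) := min_le_right _ _
    linarith
  have e2 : max 0 (min 1 (v+r+0) - max 0 (u-r+0)) ≤ min 1 (v+r) - max 0 (u-r) := by
    rw [show v+r+0 = v+r by ring, show u-r+0 = u-r by ring]
    have h1 : (0:ℝ) ≤ min 1 (v+r) := le_min (by norm_num) (by linarith)
    have h2 : max 0 (u-r) ≤ min 1 (v+r) :=
      max_le h1 (le_min (by linarith) (by linarith))
    exact max_le (by linarith) le_rfl
  have e3 : max 0 (min 1 (v+r+1) - max 0 (u-r+1)) = max 0 (r - u) := by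
    rw [min_eq_left (by linarith), max_eq_right (by linarith : (0:ℝ) ≤ u-r+1)]
    congr 1; ring
  have b1 : max 0 (v+r-1) ≤ max 0 (r-u) + (v+r) - 1 ∨ True := Or.inr trivial
  -- combine by cases on signs
  rcases le_or_gt (v+r) 1 with h2 | h2
  · have e1' : max 0 (min 1 (v+r+(-1)) - max 0 (u-r+(-1))) = 0 := by
      rw [max_eq_left]
      have : min 1 (v+r+(-1)) ≤ v+r+(-1) := min_le_right _ _
      have : max 0 (u-r+(-1)) ≥ 0 := le_max_left _ _
      linarith
    rcases le_or_gt u r with h3 | h3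
    · have e3' : max 0 (r - u) = r - u := max_eq_right (by linarith)
      have : min 1 (v+r) = v + r := min_eq_right h2
      have : max 0 (u-r) ≥ 0 := le_max_left _ _
      rw [e1', e3] at *
      rw [e3']
      have := e2
      linarith
    · have e3' : max 0 (r - u) = 0 := max_eq_left (by linarith)
      have h4 : max 0 (u-r) = u - r := max_eq_right (by linarith)
      have : min 1 (v+r) ≤ v + r := min_le_right _ _
      rw [e1', e3, e3']
      rw [h4] at e2
      linarith
  · have e1'' : max 0 (v+r-1) = v+r-1 := max_eq_right (by linarith)
    have h5 : min 1 (v+r) = 1 := min_eq_left (by linarith)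
    rcases le_or_gt u r with h3 | h3
    · have e3' : max 0 (r - u) = r - u := max_eq_right (by linarith)
      have : max 0 (u-r) ≥ 0 := le_max_left _ _
      rw [e3, e3']
      rw [h5] at e2
      linarith [e1.trans_eq e1'']
    · have e3' : max 0 (r - u) = 0 := max_eq_left (by linarith)
      have h4 : max 0 (u-r) = u - r := max_eq_right (by linarith)
      rw [e3, e3']
      rw [h5, h4] at e2
      linarith [e1.trans_eq e1'']

lemma ballMod_lower (x₀ r : ℝ) (hx0 : 0 ≤ x₀) (hx1 : x₀ ≤ 1) (hr : 0 < r) (h2r : 2*r < 1) :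
    ENNReal.ofReal (2*r) ≤ volume (ballMod x₀ r) := by
  set P : ℝ → Set ℝ := fun m => Set.Ico (0:ℝ) 1 ∩ Set.Icc (x₀ - r + m) (x₀ + r + m) with hP
  have hPsub : ∀ m : ℤ, P (m:ℝ) ⊆ ballMod x₀ r := by
    rintro m y ⟨hy1, hy2⟩
    refine ⟨hy1, ?_⟩
    have h1 := nint_le (y - x₀) m
    have h2 : |y - x₀ - (m : ℤ)| ≤ r := by
      rw [abs_le]
      constructor <;> [linarith [hy2.1]; linarith [hy2.2]]
    linarith
  have hmeas : ∀ m : ℝ, MeasurableSet (P m) := fun m =>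
    measurableSet_Ico.inter measurableSet_Icc
  have hd1 : Disjoint (P (-1)) (P 0) := by
    rw [Set.disjoint_left]
    rintro y ⟨_, hy1⟩ ⟨_, hy2⟩
    have := hy1.2; have := hy2.1; linarith
  have hd2 : Disjoint (P (-1) ∪ P 0) (P 1) := by
    rw [Set.disjoint_left]
    rintro y (⟨_, hy1⟩ | ⟨_, hy1⟩) ⟨_, hy2⟩ <;>
      [skip; skip] <;> (have := hy1.2; have := hy2.1; linarith)
  have hsub : P (-1) ∪ P 0 ∪ P 1 ⊆ ballMod x₀ r := by
    apply Set.union_subset (Set.union_subset ?_ ?_) ?_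
    · exact_mod_cast hPsub (-1)
    · exact_mod_cast hPsub 0
    · exact_mod_cast hPsub 1
  calc ENNReal.ofReal (2*r)
      ≤ ENNReal.ofReal (min 1 (x₀+r+(-1)) - max 0 (x₀-r+(-1)))
        + ENNReal.ofReal (min 1 (x₀+r+0) - max 0 (x₀-r+0))
        + ENNReal.ofReal (min 1 (x₀+r+1) - max 0 (x₀-r+1)) := by
        rw [ofReal_add3]
        exact ENNReal.ofReal_le_ofReal (real_lower x₀ r hx0 hx1 hr h2r)
    _ = volume (P (-1)) + volume (P 0) + volume (P 1) := by
        rw [hP]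
        simp only []
        rw [vol_Ico_inter_Icc, vol_Ico_inter_Icc, vol_Ico_inter_Icc]
    _ = volume (P (-1) ∪ P 0 ∪ P 1) := by
        rw [measure_union hd2 (hmeas 1), measure_union hd1 (hmeas 0)]
    _ ≤ volume (ballMod x₀ r) := measure_mono hsub

/-- The enlarged window. -/
def winW (u v r : ℝ) : Set ℝ :=
  Set.Ico (0:ℝ) 1 ∩ (Set.Icc (u-r+(-1)) (v+r+(-1)) ∪ Set.Icc (u-r+0) (v+r+0) ∪ Set.Icc (u-r+1) (v+r+1))

lemma measurableSet_winW (u v r : ℝ) : MeasurableSet (winW u v r) :=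
  measurableSet_Ico.inter ((measurableSet_Icc.union measurableSet_Icc).union measurableSet_Icc)

lemma winW_upper (u v r : ℝ) (hu : 0 ≤ u) (huv : u ≤ v) (hv : v ≤ 1) (hr : 0 < r)
    (h2r : 2*r < 1) : volume (winW u v r) ≤ ENNReal.ofReal ((v-u) + 2*r) := by
  have : winW u v r ⊆ (Set.Ico (0:ℝ) 1 ∩ Set.Icc (u-r+(-1)) (v+r+(-1)))
      ∪ (Set.Ico (0:ℝ) 1 ∩ Set.Icc (u-r+0) (v+r+0))
      ∪ (Set.Ico (0:ℝ) 1 ∩ Set.Icc (u-r+1) (v+r+1)) := by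
    rintro y ⟨h1, (h2 | h2) | h2⟩
    · exact Or.inl (Or.inl ⟨h1, h2⟩)
    · exact Or.inl (Or.inr ⟨h1, h2⟩)
    · exact Or.inr ⟨h1, h2⟩
  calc volume (winW u v r) ≤ _ := measure_mono this
    _ ≤ volume (Set.Ico (0:ℝ) 1 ∩ Set.Icc (u-r+(-1)) (v+r+(-1)))
        + volume (Set.Ico (0:ℝ) 1 ∩ Set.Icc (u-r+0) (v+r+0))
        + volume (Set.Ico (0:ℝ) 1 ∩ Set.Icc (u-r+1) (v+r+1)) :=
      le_trans (measure_union_le _ _) (add_le_add (measure_union_le _ _) le_rfl)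
    _ ≤ ENNReal.ofReal ((v-u) + 2*r) := by
        rw [vol_Ico_inter_Icc, vol_Ico_inter_Icc, vol_Ico_inter_Icc, ofReal_add3]
        exact ENNReal.ofReal_le_ofReal (real_upper u v r hu huv hv hr h2r)

lemma ballMod_subset_winW (u v r x₀ : ℝ) (hu : 0 ≤ u) (hv : v ≤ 1) (hx : x₀ ∈ Set.Icc u v)
    (hr : 0 < r) (h2r : 2*r < 1) : ballMod x₀ r ⊆ winW u v r := by
  rintro y ⟨hy1, hy2⟩
  refine ⟨hy1, ?_⟩
  set m := round (y - x₀) with hm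
  have hb : |y - x₀ - m| ≤ r := hy2
  have hm1 : (-2:ℝ) < (m:ℝ) ∧ (m:ℝ) < 2 := by
    have h1 : -1 ≤ y - x₀ := by have := hx.2; have := hy1.1; linarith
    have h2 : y - x₀ < 1 := by have := hx.1; have := hy1.2; linarith
    have := abs_sub_round (y - x₀)
    rw [← hm, abs_le] at this
    constructor <;> nlinarith [this.1, this.2]
  have hm2 : m = -1 ∨ m = 0 ∨ m = 1 := by
    have h1 : (-2:ℤ) < m := by exact_mod_cast hm1.1
    have h2 : m < (2:ℤ) := by exact_mod_cast hm1.2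
    omega
  have hyi : x₀ + m - r ≤ y ∧ y ≤ x₀ + m + r := by
    rw [abs_le] at hb; constructor <;> linarith [hb.1, hb.2]
  rcases hm2 with h | h | h <;> rw [h] at hyi <;> push_cast at hyi
  · exact Or.inl (Or.inl ⟨by have := hx.1; linarith [hyi.1], by have := hx.2; linarith [hyi.2]⟩)
  · exact Or.inl (Or.inr ⟨by have := hx.1; linarith [hyi.1], by have := hx.2; linarith [hyi.2]⟩)
  · exact Or.inr ⟨by have := hx.1; linarith [hyi.1], by have := hx.2; linarith [hyi.2]⟩
lemma cs_measure {ι : Type*} (T : Finset ι) (B : ι → Set ℝ) (hB : ∀ i, MeasurableSet (B i))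
    (W : Set ℝ) (hW : MeasurableSet W) (hsub : ∀ i ∈ T, B i ⊆ W) :
    (∑ i ∈ T, volume (B i)) ^ 2 ≤ (∑ i ∈ T, ∑ j ∈ T, volume (B i ∩ B j)) * volume W := by
  classical
  set F : ℝ → ℝ≥0∞ := fun y => ∑ i ∈ T, (B i).indicator 1 y with hF
  have hFm : Measurable F := by
    apply Finset.measurable_sum
    intro i _
    exact measurable_const.indicator (hB i)
  have h1 : ∫⁻ y, F y = ∑ i ∈ T, volume (B i) := by
    show ∫⁻ y, ∑ i ∈ T, (B i).indicator 1 y = _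
    calc ∫⁻ y, ∑ i ∈ T, (B i).indicator 1 y = ∑ i ∈ T, ∫⁻ y, (B i).indicator 1 y :=
          lintegral_finset_sum (f := fun i y => (B i).indicator 1 y) T
            (fun i _ => measurable_const.indicator (hB i))
      _ = ∑ i ∈ T, volume (B i) :=
          Finset.sum_congr rfl fun i _ => lintegral_indicator_one (hB i)
  have h2 : ∫⁻ y, F y * F y = ∑ i ∈ T, ∑ j ∈ T, volume (B i ∩ B j) := by
    have e : ∀ y, F y * F y = ∑ i ∈ T, ∑ j ∈ T, ((B i ∩ B j).indicator 1 y) := by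
      intro y
      rw [hF]
      simp only [Finset.sum_mul_sum]
      refine Finset.sum_congr rfl fun i _ => Finset.sum_congr rfl fun j _ => ?_
      rw [Set.inter_indicator_one]
      rfl
    calc ∫⁻ y, F y * F y = ∫⁻ y, ∑ i ∈ T, ∑ j ∈ T, ((B i ∩ B j).indicator 1 y) := by
          simp only [e]
      _ = ∑ i ∈ T, ∫⁻ y, ∑ j ∈ T, ((B i ∩ B j).indicator 1 y) :=
          lintegral_finset_sum (f := fun i y => ∑ j ∈ T, ((B i ∩ B j).indicator 1 y)) T
            (fun i _ => Finset.measurable_sum _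
              (fun j _ => measurable_const.indicator ((hB i).inter (hB j))))
      _ = ∑ i ∈ T, ∑ j ∈ T, volume (B i ∩ B j) := by
          refine Finset.sum_congr rfl fun i _ => ?_
          calc ∫⁻ y, ∑ j ∈ T, ((B i ∩ B j).indicator 1 y)
              = ∑ j ∈ T, ∫⁻ y, (B i ∩ B j).indicator 1 y :=
                lintegral_finset_sum (f := fun j y => (B i ∩ B j).indicator 1 y) T
                  (fun j _ => measurable_const.indicator ((hB i).inter (hB j)))
            _ = ∑ j ∈ T, volume (B i ∩ B j) :=
                Finset.sum_congr rfl fun j _ => lintegral_indicator_one ((hB i).inter (hB j))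
  have hFW : ∀ y, F y = F y * W.indicator 1 y := by
    intro y
    by_cases hy : y ∈ W
    · simp [Set.indicator_of_mem hy]
    · have : F y = 0 := by
        rw [hF]
        refine Finset.sum_eq_zero fun i hi => ?_
        exact Set.indicator_of_notMem (fun h => hy (hsub i hi h)) _
      simp [this]
  have hconj : Real.HolderConjugate 2 2 := Real.HolderConjugate.two_two
  have hcs := ENNReal.lintegral_mul_le_Lp_mul_Lq (volume : Measure ℝ) hconj
    hFm.aemeasurable (measurable_const.indicator hW).aemeasurable (f := F) (g := W.indicator 1)
  -- simplify the three integrals in hcs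
  have hWsq : ∫⁻ y, (W.indicator 1 y : ℝ≥0∞) ^ (2:ℝ) = volume W := by
    have : ∀ y, (W.indicator 1 y : ℝ≥0∞) ^ (2:ℝ) = W.indicator 1 y := by
      intro y
      by_cases hy : y ∈ W <;>
        simp [Set.indicator_of_mem, Set.indicator_of_notMem, hy, ENNReal.rpow_natCast,
          ENNReal.zero_rpow_of_pos]
    simp only [this]
    exact lintegral_indicator_one hW
  have hFsq : ∫⁻ y, F y ^ (2:ℝ) = ∫⁻ y, F y * F y := by
    congr 1; funext y
    rw [show (2:ℝ) = ((2:ℕ):ℝ) by norm_num, ENNReal.rpow_natCast, sq]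
  have hleft : ∫⁻ y, ((F * W.indicator 1 : ℝ → ℝ≥0∞)) y = ∫⁻ y, F y := by
    congr 1; funext y
    exact (hFW y).symm
  rw [hleft, hFsq, h2, hWsq, h1] at hcs
  -- now hcs : ∑ vol B ≤ (∑∑)^(1/2) * (vol W)^(1/2)
  calc (∑ i ∈ T, volume (B i)) ^ 2
      ≤ ((∑ i ∈ T, ∑ j ∈ T, volume (B i ∩ B j)) ^ (1/2:ℝ) * volume W ^ (1/2:ℝ)) ^ 2 := by
        exact pow_le_pow_left₀ zero_le hcs 2
    _ = (∑ i ∈ T, ∑ j ∈ T, volume (B i ∩ B j)) * volume W := by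
        rw [mul_pow, ← ENNReal.rpow_natCast (_ ^ (1/2:ℝ)) 2, ← ENNReal.rpow_natCast (_ ^ (1/2:ℝ)) 2,
          ← ENNReal.rpow_mul, ← ENNReal.rpow_mul]
        norm_num
lemma CkStar_sum_eq (k N : ℕ) (hk : 2 ≤ k) (x : ℕ → ℝ) (s : ℝ) (A : Set ℝ) :
    CkStarLoc x k N A s = (N:ℝ) ^ (k-2) *
      ∑ n ∈ (Finset.Icc 1 N).filter (fun n => x n ∈ A),
        (∑ j ∈ (Finset.Icc 1 N).filter (fun n => x n ∈ A), lamN x s N n j) ^ (k-1) := by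
  have h0 : 0 < k := by omega
  unfold CkStarLoc
  congr 1
  set T := (Finset.Icc 1 N).filter (fun n => x n ∈ A) with hT
  set fwd : (Fin k → ℕ) → ℕ × (Fin (k-1) → ℕ) :=
    fun i => (i ⟨0, h0⟩, fun r => i ⟨r.1+1, by have := r.2; omega⟩) with hfwd
  set bwd : ℕ × (Fin (k-1) → ℕ) → (Fin k → ℕ) :=
    fun p j => if h : (j:ℕ) = 0 then p.1 else p.2 ⟨(j:ℕ) - 1, by have := j.2; omega⟩ with hbwd
  have step1 :
      (∑ i ∈ Fintype.piFinset (fun _ : Fin k => Finset.Icc 1 N),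
        if ∀ j : Fin k, x (i j) ∈ A then
          ∏ r : Fin (k - 1),
            lamN x s N (i ⟨0, by have := r.2; omega⟩) (i ⟨r.1 + 1, by have := r.2; omega⟩)
        else 0)
      = ∑ p ∈ (Finset.Icc 1 N) ×ˢ Fintype.piFinset (fun _ : Fin (k-1) => Finset.Icc 1 N),
          (if x p.1 ∈ A then 1 else 0) *
            ∏ r : Fin (k-1), (if x (p.2 r) ∈ A then lamN x s N p.1 (p.2 r) else 0) := by
    refine Finset.sum_nbij' fwd bwd ?_ ?_ ?_ ?_ ?_
    · intro i hi
      rw [Fintype.mem_piFinset] at hi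
      rw [Finset.mem_product]
      exact ⟨hi _, by rw [Fintype.mem_piFinset]; intro r; exact hi _⟩
    · intro p hp
      rw [Finset.mem_product, Fintype.mem_piFinset] at hp
      rw [Fintype.mem_piFinset]
      intro j
      simp only [hbwd]
      by_cases hj : (j:ℕ) = 0
      · rw [dif_pos hj]; exact hp.1
      · rw [dif_neg hj]; exact hp.2 _
    · intro i _
      funext j
      rw [hbwd, hfwd]
      by_cases hj : (j:ℕ) = 0
      · simp only [dif_pos hj]
        exact congrArg i (Fin.ext hj.symm)
      · simp only [dif_neg hj]
        exact congrArg i (Fin.ext (by simp; omega))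
    · intro p _
      rw [hfwd, hbwd]
      refine Prod.ext ?_ ?_
      · simp
      · funext r
        simp only [dif_neg (Nat.succ_ne_zero r.1)]
        exact congrArg p.2 (Fin.ext (by simp))
    · intro i _
      by_cases hall : ∀ j : Fin k, x (i j) ∈ A
      · rw [if_pos hall, if_pos (hall _), one_mul]
        refine Finset.prod_congr rfl fun r _ => ?_
        rw [if_pos (hall _)]
      · rw [if_neg hall]
        push_neg at hall
        obtain ⟨j0, hj0⟩ := hall
        symm
        by_cases hz : (j0:ℕ) = 0
        · have : x (fwd i).1 ∉ A := by
            rw [hfwd]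
            have : (⟨0, h0⟩ : Fin k) = j0 := Fin.ext hz.symm
            rw [this]; exact hj0
          rw [if_neg this, zero_mul]
        · have hr0 : (j0:ℕ) - 1 < k - 1 := by have := j0.2; omega
          rw [mul_eq_zero]
          right
          refine Finset.prod_eq_zero (Finset.mem_univ (⟨(j0:ℕ) - 1, hr0⟩ : Fin (k-1))) ?_
          have harg : ((fwd i).2 ⟨(j0:ℕ) - 1, hr0⟩) = i j0 := by
            rw [hfwd]
            exact congrArg i (Fin.ext (by simp; omega))
          rw [harg, if_neg hj0]
  rw [step1, Finset.sum_product]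
  have step2 : ∀ n, (∑ m ∈ Fintype.piFinset (fun _ : Fin (k-1) => Finset.Icc 1 N),
      (if x n ∈ A then 1 else 0) *
        ∏ r : Fin (k-1), (if x (m r) ∈ A then lamN x s N n (m r) else 0))
      = (if x n ∈ A then 1 else 0) * (∑ j ∈ T, lamN x s N n j) ^ (k-1) := by
    intro n
    rw [← Finset.mul_sum]
    congr 1
    rw [← Finset.prod_univ_sum (fun _ : Fin (k-1) => Finset.Icc 1 N)
      (fun r j => if x j ∈ A then lamN x s N n j else 0)]
    have : ∀ r : Fin (k-1), (∑ j ∈ Finset.Icc 1 N,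
        (if x j ∈ A then lamN x s N n j else 0)) = ∑ j ∈ T, lamN x s N n j := by
      intro r
      rw [hT, Finset.sum_filter]
    rw [Finset.prod_congr rfl (fun r _ => this r), Finset.prod_const, Finset.card_univ,
      Fintype.card_fin]
  rw [Finset.sum_congr rfl (fun n _ => step2 n), hT, Finset.sum_filter]
  exact Finset.sum_congr rfl fun n _ => boole_mul _ _

lemma alg_id (l : ℕ) (m n t a : ℝ) (hn : 0 < n) (hm : 0 < m) (ha : 0 < a + t) :
    (m/n)^(l+2) * (t*n)^(2*(l+1)) / (a + t)^(l+1)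
      = n^l * (((m*t)^2/(a + t))^(l+1) / m^l) := by
  rw [show 2*(l+1) = 2*l+2 from by ring]
  rw [div_pow, mul_pow, div_pow, mul_pow, pow_add, pow_add, pow_add, pow_add, pow_mul, pow_mul]
  field_simp
  ring

lemma key_ineq (k : ℕ) (hk : 2 ≤ k) (x : ℕ → ℝ) (hx : ∀ n, x n ∈ Set.Icc (0 : ℝ) 1)
    (u v : ℝ) (hu : 0 ≤ u) (huv : u < v) (hv : v ≤ 1) (s : ℝ) (hs : 0 < s)
    (N : ℕ) (hN : 1 ≤ N) (hsN : s < N) :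
    ((((Finset.Icc 1 N).filter (fun n => x n ∈ Set.Icc u v)).card : ℝ)/N)^k * s^(2*(k-1))
      / ((v-u) + s/N)^(k-1) ≤ CkStarLoc x k N (Set.Icc u v) s := by
  obtain ⟨l, rfl⟩ : ∃ l, k = l + 2 := ⟨k - 2, by omega⟩
  set T := (Finset.Icc 1 N).filter (fun n => x n ∈ Set.Icc u v) with hT
  set M := T.card with hM
  have hNR : (0:ℝ) < N := by exact_mod_cast hN
  set r := s / (2 * (N:ℝ)) with hr
  have hrpos : 0 < r := by positivity
  have h2r : 2*r = s/N := by rw [hr]; field_simp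
  have hs2 : s = 2*r*(N:ℝ) := by rw [hr]; field_simp
  have h2r1 : 2*r < 1 := by rw [h2r, div_lt_one hNR]; exact hsN
  have ha : (0:ℝ) < v - u := by linarith
  have hat : (0:ℝ) < (v - u) + 2*r := by positivity
  have hCk : CkStarLoc x (l+2) N (Set.Icc u v) s
      = (N:ℝ) ^ l * ∑ n ∈ T, (∑ j ∈ T, lamN x s N n j) ^ (l+1) := by
    rw [hT, CkStar_sum_eq (l+2) N (by omega) x s (Set.Icc u v)]
    simp [Finset.filter_congr_decidable]
  set L : ℕ → ℝ := fun n => ∑ j ∈ T, lamN x s N n j with hL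
  have hLnn : ∀ n ∈ T, 0 ≤ L n := fun n _ =>
    Finset.sum_nonneg fun j _ => ENNReal.toReal_nonneg
  have hCknn : 0 ≤ CkStarLoc x (l+2) N (Set.Icc u v) s := by
    rw [hCk]
    apply mul_nonneg (by positivity)
    exact Finset.sum_nonneg fun n hn => pow_nonneg (hLnn n hn) _
  rcases Nat.eq_zero_or_pos M with hM0 | hM1
  · rw [hM0]
    push_cast
    rw [zero_div, zero_pow (by omega : l+2 ≠ 0), zero_mul, zero_div]
    exact hCknn
  have hmpos : (0:ℝ) < M := by exact_mod_cast hM1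
  set B : ℕ → Set ℝ := fun n => ballMod (x n) r with hB
  have hBmeas : ∀ n, MeasurableSet (B n) := fun n => measurableSet_ballMod _ _
  have hBsub : ∀ n ∈ T, B n ⊆ winW u v r := by
    intro n hn
    rw [hT, Finset.mem_filter] at hn
    exact ballMod_subset_winW u v r (x n) hu hv hn.2 hrpos h2r1
  have hcs := cs_measure T B hBmeas (winW u v r) (measurableSet_winW u v r) hBsub
  have hlamN : ∀ n j, lamN x s N n j = (volume (B n ∩ B j)).toReal := fun n j => rfl
  have hBfin : ∀ n j : ℕ, volume (B n ∩ B j) ≠ ⊤ := by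
    intro n j
    refine ne_top_of_le_ne_top ?_ (measure_mono (fun y hy => hy.1.1))
    rw [Real.volume_Ico]
    exact ENNReal.ofReal_ne_top
  set I2 : ℝ := ∑ n ∈ T, L n with hI2
  have hI2nn : 0 ≤ I2 := Finset.sum_nonneg hLnn
  have hJ : (∑ n ∈ T, ∑ j ∈ T, volume (B n ∩ B j)) = ENNReal.ofReal I2 := by
    rw [hI2, ENNReal.ofReal_sum_of_nonneg hLnn]
    refine Finset.sum_congr rfl fun n hn => ?_
    simp only [hL]
    simp only [hlamN]
    rw [ENNReal.ofReal_sum_of_nonneg (fun j _ => ENNReal.toReal_nonneg)]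
    exact Finset.sum_congr rfl fun j _ => (ENNReal.ofReal_toReal (hBfin n j)).symm
  have hlower : ENNReal.ofReal ((M:ℝ) * (2*r)) ≤ ∑ n ∈ T, volume (B n) := by
    calc ENNReal.ofReal ((M:ℝ) * (2*r)) = ∑ _n ∈ T, ENNReal.ofReal (2*r) := by
          rw [Finset.sum_const, ← hM, nsmul_eq_mul, ← ENNReal.ofReal_natCast M,
            ← ENNReal.ofReal_mul (Nat.cast_nonneg M)]
      _ ≤ ∑ n ∈ T, volume (B n) := by
          refine Finset.sum_le_sum fun n _ => ?_
          exact ballMod_lower (x n) r (hx n).1 (hx n).2 hrpos h2r1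
  have hWup : volume (winW u v r) ≤ ENNReal.ofReal ((v-u) + 2*r) :=
    winW_upper u v r hu huv.le hv hrpos h2r1
  have hchain : ENNReal.ofReal (((M:ℝ) * (2*r))^2) ≤ ENNReal.ofReal (I2 * ((v-u) + 2*r)) := by
    calc ENNReal.ofReal (((M:ℝ) * (2*r))^2)
        = (ENNReal.ofReal ((M:ℝ) * (2*r)))^2 := by
          rw [← ENNReal.ofReal_pow (mul_nonneg (Nat.cast_nonneg M) (by linarith))]
      _ ≤ (∑ n ∈ T, volume (B n))^2 := pow_le_pow_left₀ zero_le hlower 2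
      _ ≤ (∑ n ∈ T, ∑ j ∈ T, volume (B n ∩ B j)) * volume (winW u v r) := hcs
      _ ≤ ENNReal.ofReal I2 * ENNReal.ofReal ((v-u) + 2*r) := by
          rw [hJ]
          exact mul_le_mul_right hWup _
      _ = ENNReal.ofReal (I2 * ((v-u) + 2*r)) := by
          rw [ENNReal.ofReal_mul hI2nn]
  have hreal : ((M:ℝ) * (2*r))^2 ≤ I2 * ((v-u) + 2*r) :=
    (ENNReal.ofReal_le_ofReal_iff (mul_nonneg hI2nn hat.le)).mp hchain
  set Q : ℝ := ((M:ℝ)*(2*r))^2 / ((v-u)+2*r) with hQ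
  have hQnn : 0 ≤ Q := div_nonneg (sq_nonneg _) hat.le
  have hQle : Q ≤ I2 := by
    rw [hQ, div_le_iff₀ hat]
    exact hreal
  have hpm := pow_sum_div_card_le_sum_pow (s := T) (f := L) hLnn l
  rw [← hM] at hpm
  have h5 : Q ^ (l+1) ≤ (∑ n ∈ T, L n) ^ (l+1) := pow_le_pow_left₀ hQnn hQle _
  have h6 : Q^(l+1) * (((M:ℝ))^l)⁻¹ ≤ (∑ n ∈ T, L n)^(l+1) * (((M:ℝ))^l)⁻¹ :=
    mul_le_mul_of_nonneg_right h5 (inv_nonneg.mpr (pow_nonneg (Nat.cast_nonneg M) _))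
  rw [← div_eq_mul_inv, ← div_eq_mul_inv] at h6
  have hid : ((M:ℝ)/N)^(l+2) * s^(2*(l+1)) / ((v-u)+s/N)^(l+1)
      = (N:ℝ)^l * (Q^(l+1)/(M:ℝ)^l) := by
    rw [hQ, ← h2r]
    nth_rewrite 1 [hs2]
    exact alg_id l (M:ℝ) (N:ℝ) (2*r) (v-u) hNR hmpos hat
  rw [show l+2-1 = l+1 from by omega, hid, hCk]
  apply mul_le_mul_of_nonneg_left _ (by positivity)
  exact h6.trans hpm

theorem liminf_CkStarLoc_ge
    (k : ℕ) (hk : 2 ≤ k) (x : ℕ → ℝ) (hx : ∀ n, x n ∈ Set.Icc (0 : ℝ) 1)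
    (Nj : ℕ → ℕ) (hmono : StrictMono Nj) (hpos : ∀ j, 1 ≤ Nj j)
    (G : ℝ → ℝ)
    (hG : ∀ t ∈ Set.Icc (0 : ℝ) 1,
      Tendsto (fun j : ℕ =>
          (((Finset.Icc 1 (Nj j)).filter fun n => x n ≤ t).card : ℝ) / (Nj j))
        atTop (nhds (G t)))
    (u v : ℝ) (hu : 0 ≤ u) (huv : u < v) (hv : v ≤ 1) :
    ∀ s : ℝ, 0 < s →
      ENNReal.ofReal ((G v - G u) ^ k / (v - u) ^ (k - 1) * s ^ (2 * (k - 1))) ≤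
        Filter.liminf
          (fun j : ℕ => ENNReal.ofReal (CkStarLoc x k (Nj j) (Set.Icc u v) s)) atTop := by
  intro s hs
  set c : ℕ → ℝ := fun j =>
    (((Finset.Icc 1 (Nj j)).filter fun n => x n ≤ v).card : ℝ) / (Nj j)
      - (((Finset.Icc 1 (Nj j)).filter fun n => x n ≤ u).card : ℝ) / (Nj j) with hcdef
  have hc : Tendsto c atTop (nhds (G v - G u)) :=
    (hG v ⟨le_trans hu huv.le, hv⟩).sub (hG u ⟨hu, le_trans huv.le hv⟩)
  set M : ℕ → ℕ := fun j => ((Finset.Icc 1 (Nj j)).filter fun n => x n ∈ Set.Icc u v).card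
    with hMdef
  have hNpos : ∀ j, (0:ℝ) < Nj j := fun j => by exact_mod_cast hpos j
  have hcM : ∀ j, c j ≤ (M j : ℝ)/(Nj j) := by
    intro j
    have hsubset : (Finset.Icc 1 (Nj j)).filter (fun n => x n ≤ v) ⊆
        ((Finset.Icc 1 (Nj j)).filter (fun n => x n ≤ u))
          ∪ ((Finset.Icc 1 (Nj j)).filter (fun n => x n ∈ Set.Icc u v)) := by
      intro n hn
      rw [Finset.mem_filter] at hn
      rcases le_or_gt (x n) u with h | h
      · exact Finset.mem_union_left _ (Finset.mem_filter.mpr ⟨hn.1, h⟩)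
      · exact Finset.mem_union_right _ (Finset.mem_filter.mpr ⟨hn.1, ⟨h.le, hn.2⟩⟩)
    have hcard := (Finset.card_le_card hsubset).trans (Finset.card_union_le _ _)
    have hcast : ((((Finset.Icc 1 (Nj j)).filter fun n => x n ≤ v).card : ℝ)) ≤
        ((((Finset.Icc 1 (Nj j)).filter fun n => x n ≤ u).card : ℝ)) + (M j : ℝ) := by
      rw [hMdef]
      exact_mod_cast hcard
    simp only [hcdef]
    rw [div_sub_div_same, div_le_div_iff₀ (hNpos j) (hNpos j)]
    nlinarith [hNpos j, hcast]
  have hcnn : ∀ j, 0 ≤ c j := by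
    intro j
    simp only [hcdef]
    rw [div_sub_div_same]
    apply div_nonneg _ (hNpos j).le
    rw [sub_nonneg]
    have hsub : (Finset.Icc 1 (Nj j)).filter (fun n => x n ≤ u) ⊆
        (Finset.Icc 1 (Nj j)).filter (fun n => x n ≤ v) :=
      Finset.monotone_filter_right _ (fun n _ h => le_trans h huv.le)
    exact_mod_cast Finset.card_le_card hsub
  have hb0 : 0 ≤ G v - G u := ge_of_tendsto hc (Filter.Eventually.of_forall hcnn)
  set lo : ℕ → ℝ := fun j => (c j)^k * s^(2*(k-1)) / ((v-u) + s/(Nj j))^(k-1) with hlodef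
  have hNj_atTop : Tendsto (fun j => (Nj j : ℝ)) atTop atTop :=
    tendsto_natCast_atTop_atTop.comp hmono.tendsto_atTop
  have hsN0 : Tendsto (fun j => s/(Nj j : ℝ)) atTop (nhds 0) :=
    Tendsto.div_atTop tendsto_const_nhds hNj_atTop
  have hlo : Tendsto lo atTop
      (nhds ((G v - G u)^k * s^(2*(k-1)) / (v-u)^(k-1))) := by
    have h2 : Tendsto (fun j => (v-u) + s/(Nj j:ℝ)) atTop (nhds ((v-u) + 0)) :=
      tendsto_const_nhds.add hsN0
    rw [add_zero] at h2
    exact ((hc.pow k).mul tendsto_const_nhds).div (h2.pow (k-1))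
      (pow_ne_zero _ (ne_of_gt (by linarith)))
  have hev : ∀ᶠ j in atTop, ENNReal.ofReal (lo j)
      ≤ ENNReal.ofReal (CkStarLoc x k (Nj j) (Set.Icc u v) s) := by
    filter_upwards [hNj_atTop.eventually_gt_atTop s] with j hj
    apply ENNReal.ofReal_le_ofReal
    refine le_trans ?_ (key_ineq k hk x hx u v hu huv hv s hs (Nj j) (hpos j) hj)
    have h1 : c j ≤ (M j:ℝ)/(Nj j) := hcM j
    have hpow : (c j)^k ≤ ((M j:ℝ)/(Nj j))^k := pow_le_pow_left₀ (hcnn j) h1 k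
    have hbase : (0:ℝ) ≤ (v-u) + s/(Nj j) := by
      have : (0:ℝ) ≤ s/(Nj j) := by positivity
      linarith
    have hinv : (0:ℝ) ≤ (((v-u) + s/(Nj j))^(k-1))⁻¹ :=
      inv_nonneg.mpr (pow_nonneg hbase _)
    calc lo j = (c j)^k * s^(2*(k-1)) * (((v-u) + s/(Nj j))^(k-1))⁻¹ := by
          rw [hlodef]; exact div_eq_mul_inv _ _
      _ ≤ ((M j:ℝ)/(Nj j))^k * s^(2*(k-1)) * (((v-u) + s/(Nj j))^(k-1))⁻¹ :=
          mul_le_mul_of_nonneg_right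
            (mul_le_mul_of_nonneg_right hpow (by positivity)) hinv
      _ = ((M j:ℝ)/(Nj j))^k * s^(2*(k-1)) / ((v-u) + s/(Nj j))^(k-1) :=
          (div_eq_mul_inv _ _).symm
  refine le_trans ?_ (Filter.liminf_le_liminf hev)
  have hten : Tendsto (fun j => ENNReal.ofReal (lo j)) atTop
      (nhds (ENNReal.ofReal ((G v - G u)^k * s^(2*(k-1)) / (v-u)^(k-1)))) :=
    (ENNReal.continuous_ofReal.tendsto _).comp hlo
  rw [hten.liminf_eq]
  apply le_of_eq
  congr 1
  ring
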